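/- For every real number b > 0, ∑_{j=0}^∞ 2^j · cosh(2^j b)/sinh²(2^j b) = 1/(2 sinh²(b/2)). -/

import Mathlib

theorem stmt2 (b : ℝ) (hb : 0 < b) :
    HasSum (fun j : ℕ => 2 ^ j * Real.cosh (2 ^ j * b) / Real.sinh (2 ^ j * b) ^ 2)
      (1 / (2 * Real.sinh (b / 2) ^ 2)) := by
  set f : ℕ → ℝ := fun j => 2 ^ j * Real.cosh (2 ^ j * b) / Real.sinh (2 ^ j * b) ^ 2 with hf
  set g : ℕ → ℝ := fun j => 2 ^ j / (2 * Real.sinh (2 ^ j * b / 2) ^ 2) with hg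
  have hnonneg : ∀ j, 0 ≤ f j := by
    intro j
    apply div_nonneg
    · positivity
    · positivity
  have hstep : ∀ j, f j = g j - g (j + 1) := by
    intro j
    have hx : (0:ℝ) < 2 ^ j * b / 2 := by positivity
    set x : ℝ := 2 ^ j * b / 2 with hxdef
    have h2x : 2 ^ j * b = 2 * x := by ring
    have h2x' : 2 ^ (j + 1) * b / 2 = 2 ^ j * b := by ring
    have hs : Real.sinh x ≠ 0 := ne_of_gt (Real.sinh_pos_iff.2 hx)
    have hc : Real.cosh x ≠ 0 := ne_of_gt (Real.cosh_pos x)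
    have hcsq : Real.cosh x ^ 2 = Real.sinh x ^ 2 + 1 := Real.cosh_sq x
    simp only [hf, hg, h2x, h2x', Real.sinh_two_mul, Real.cosh_two_mul]
    have hp : (2:ℝ) ^ (j + 1) = 2 * 2 ^ j := by ring
    rw [hp]
    field_simp
    linear_combination (-1:ℝ) * hcsq
  have hg0 : g 0 = 1 / (2 * Real.sinh (b / 2) ^ 2) := by
    simp [hg]
  have hlim : Filter.Tendsto g Filter.atTop (nhds 0) := by
    have hub : ∀ j, g j ≤ 2 / b ^ 2 * (1 / 2) ^ j := by
      intro j
      have hx : (0:ℝ) < 2 ^ j * b / 2 := by positivity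
      have hle : 2 ^ j * b / 2 ≤ Real.sinh (2 ^ j * b / 2) :=
        Real.self_le_sinh_iff.2 hx.le
      have hsq : (2 ^ j * b / 2) ^ 2 ≤ Real.sinh (2 ^ j * b / 2) ^ 2 :=
        pow_le_pow_left₀ hx.le hle 2
      have h1 : g j ≤ 2 ^ j / (2 * (2 ^ j * b / 2) ^ 2) := by
        apply div_le_div_of_nonneg_left (by positivity) (by positivity)
        nlinarith
      calc g j ≤ 2 ^ j / (2 * (2 ^ j * b / 2) ^ 2) := h1
        _ = 2 / b ^ 2 * (1 / 2) ^ j := by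
            rw [one_div, inv_pow, ← one_div]
            field_simp
    have hlb : ∀ j, 0 ≤ g j := by intro j; positivity
    have hgeo : Filter.Tendsto (fun j : ℕ => 2 / b ^ 2 * (1 / 2) ^ j)
        Filter.atTop (nhds 0) := by
      have := tendsto_pow_atTop_nhds_zero_of_lt_one (by norm_num : (0:ℝ) ≤ 1/2)
        (by norm_num : (1:ℝ)/2 < 1)
      simpa using this.const_mul (2 / b ^ 2)
    exact squeeze_zero hlb hub hgeo
  rw [hasSum_iff_tendsto_nat_of_nonneg hnonneg]
  have hsum : ∀ n, ∑ i ∈ Finset.range n, f i = g 0 - g n := by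
    intro n
    simp only [hstep]
    exact Finset.sum_range_sub' g n
  simp only [hsum, hg0]
  simpa using (tendsto_const_nhds.sub hlim)
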